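/- On the projective space P(ℝ^m) with the angular distance d(x̂,ŷ) = ‖x∧y‖ for unit representatives, the projective action of a matrix M ∈ GL(m) satisfies d(Mx̂, Mŷ)/d(x̂,ŷ) ≤ ‖∧²M‖ / (‖Mx‖·‖My‖) for unit vectors x, y with x̂ ≠ ŷ, and consequently the Lipschitz constant of the projective map induced by M is at most ‖M‖²·‖M⁻¹‖². -/
import Mathlib


open scoped RealInnerProductSpace

/-- The norm of the wedge product `‖x ∧ y‖ = √(‖x‖²‖y‖² − ⟪x,y⟫²)`.  For unit vectors
`x, y` this is the angular distance between the projective classes `x̂, ŷ`. -/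
noncomputable def wedgeNorm {m : ℕ} (x y : EuclideanSpace ℝ (Fin m)) : ℝ :=
  Real.sqrt (‖x‖ ^ 2 * ‖y‖ ^ 2 - ⟪x, y⟫ ^ 2)

/-- The operator norm `‖∧²M‖` of the induced map on the second exterior power:
the supremum of `‖Mu ∧ Mv‖` over orthonormal pairs `u, v`. -/
noncomputable def wedgeOpNorm {m : ℕ}
    (M : EuclideanSpace ℝ (Fin m) →L[ℝ] EuclideanSpace ℝ (Fin m)) : ℝ :=
  sSup {c : ℝ | ∃ u v : EuclideanSpace ℝ (Fin m),
    ‖u‖ = 1 ∧ ‖v‖ = 1 ∧ ⟪u, v⟫ = 0 ∧ c = wedgeNorm (M u) (M v)}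

lemma wedgeNorm_nonneg {m : ℕ} (x y : EuclideanSpace ℝ (Fin m)) : 0 ≤ wedgeNorm x y :=
  Real.sqrt_nonneg _

lemma wedgeNorm_le {m : ℕ} (x y : EuclideanSpace ℝ (Fin m)) : wedgeNorm x y ≤ ‖x‖ * ‖y‖ := by
  unfold wedgeNorm
  calc Real.sqrt (‖x‖ ^ 2 * ‖y‖ ^ 2 - ⟪x, y⟫ ^ 2) ≤ Real.sqrt ((‖x‖ * ‖y‖) ^ 2) := by
        apply Real.sqrt_le_sqrt; nlinarith [sq_nonneg (⟪x, y⟫ : ℝ)]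
    _ = ‖x‖ * ‖y‖ := Real.sqrt_sq (by positivity)

lemma wedgeNorm_smul_left {m : ℕ} (r : ℝ) (x y : EuclideanSpace ℝ (Fin m)) :
    wedgeNorm (r • x) y = |r| * wedgeNorm x y := by
  unfold wedgeNorm
  rw [norm_smul, real_inner_smul_left, Real.norm_eq_abs,
    show (|r| * ‖x‖) ^ 2 * ‖y‖ ^ 2 - (r * ⟪x, y⟫) ^ 2
      = r ^ 2 * (‖x‖ ^ 2 * ‖y‖ ^ 2 - ⟪x, y⟫ ^ 2) by rw [mul_pow, sq_abs]; ring,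
    Real.sqrt_mul (sq_nonneg r), Real.sqrt_sq_eq_abs]

lemma wedgeNorm_smul_right {m : ℕ} (r : ℝ) (x y : EuclideanSpace ℝ (Fin m)) :
    wedgeNorm x (r • y) = |r| * wedgeNorm x y := by
  unfold wedgeNorm
  rw [norm_smul, real_inner_smul_right, Real.norm_eq_abs,
    show ‖x‖ ^ 2 * (|r| * ‖y‖) ^ 2 - (r * ⟪x, y⟫) ^ 2
      = r ^ 2 * (‖x‖ ^ 2 * ‖y‖ ^ 2 - ⟪x, y⟫ ^ 2) by rw [mul_pow, sq_abs]; ring,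
    Real.sqrt_mul (sq_nonneg r), Real.sqrt_sq_eq_abs]

lemma wedgeNorm_add {m : ℕ} (c s : ℝ) (a b : EuclideanSpace ℝ (Fin m)) :
    wedgeNorm a (c • a + s • b) = |s| * wedgeNorm a b := by
  unfold wedgeNorm
  have h1 : ‖c • a + s • b‖ ^ 2 = c ^ 2 * ‖a‖ ^ 2 + 2 * c * s * ⟪a, b⟫ + s ^ 2 * ‖b‖ ^ 2 := by
    rw [norm_add_sq_real, norm_smul, norm_smul, real_inner_smul_left, real_inner_smul_right,
      Real.norm_eq_abs, Real.norm_eq_abs, mul_pow, mul_pow, sq_abs, sq_abs]; ring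
  have h2 : ⟪a, c • a + s • b⟫ = c * ‖a‖ ^ 2 + s * ⟪a, b⟫ := by
    rw [inner_add_right, real_inner_smul_right, real_inner_smul_right,
      real_inner_self_eq_norm_sq]
  rw [h1, h2,
    show ‖a‖ ^ 2 * (c ^ 2 * ‖a‖ ^ 2 + 2 * c * s * ⟪a, b⟫ + s ^ 2 * ‖b‖ ^ 2)
        - (c * ‖a‖ ^ 2 + s * ⟪a, b⟫) ^ 2
      = s ^ 2 * (‖a‖ ^ 2 * ‖b‖ ^ 2 - ⟪a, b⟫ ^ 2) by ring,
    Real.sqrt_mul (sq_nonneg s), Real.sqrt_sq_eq_abs]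

lemma wedgeOpNorm_mem_le {m : ℕ}
    (M : EuclideanSpace ℝ (Fin m) →L[ℝ] EuclideanSpace ℝ (Fin m)) :
    ∀ c ∈ {c : ℝ | ∃ u v : EuclideanSpace ℝ (Fin m),
      ‖u‖ = 1 ∧ ‖v‖ = 1 ∧ ⟪u, v⟫ = 0 ∧ c = wedgeNorm (M u) (M v)}, c ≤ ‖M‖ ^ 2 := by
  rintro c ⟨u, v, hu, hv, -, rfl⟩
  calc wedgeNorm (M u) (M v) ≤ ‖M u‖ * ‖M v‖ := wedgeNorm_le _ _
    _ ≤ (‖M‖ * ‖u‖) * (‖M‖ * ‖v‖) :=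
        mul_le_mul (M.le_opNorm u) (M.le_opNorm v) (norm_nonneg _) (by positivity)
    _ = ‖M‖ ^ 2 := by rw [hu, hv]; ring

lemma wedgeOpNorm_le_sq {m : ℕ}
    (M : EuclideanSpace ℝ (Fin m) →L[ℝ] EuclideanSpace ℝ (Fin m)) :
    wedgeOpNorm M ≤ ‖M‖ ^ 2 :=
  Real.sSup_le (wedgeOpNorm_mem_le M) (by positivity)

lemma wedge_core {m : ℕ}
    (M : EuclideanSpace ℝ (Fin m) →L[ℝ] EuclideanSpace ℝ (Fin m))
    (x y : EuclideanSpace ℝ (Fin m)) (hx : ‖x‖ = 1) (hy : ‖y‖ = 1) :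
    wedgeNorm (M x) (M y) ≤ wedgeOpNorm M * wedgeNorm x y := by
  have hsub : ‖y - ⟪x, y⟫ • x‖ ^ 2 = 1 - ⟪x, y⟫ ^ 2 := by
    rw [norm_sub_sq_real, real_inner_smul_right, norm_smul, hx, hy, Real.norm_eq_abs,
      real_inner_comm y x]
    simp only [mul_one, sq_abs]; ring
  have hseq : wedgeNorm x y = ‖y - ⟪x, y⟫ • x‖ := by
    unfold wedgeNorm
    rw [hx, hy, show (1 : ℝ) ^ 2 * 1 ^ 2 - ⟪x, y⟫ ^ 2 = ‖y - ⟪x, y⟫ • x‖ ^ 2 by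
      rw [hsub]; ring, Real.sqrt_sq (norm_nonneg _)]
  rcases eq_or_lt_of_le (wedgeNorm_nonneg x y) with h0 | hpos
  · -- wedgeNorm x y = 0, so y = ⟪x,y⟫ • x
    have hy' : y = ⟪x, y⟫ • x := by
      have h : ‖y - ⟪x, y⟫ • x‖ = 0 := by rw [← hseq, ← h0]
      have h2 := norm_eq_zero.mp h
      linear_combination (norm := module) h2
    have hz : wedgeNorm (M x) (M y) = 0 := by
      have hMy : M y = ⟪x, y⟫ • M x + (0 : ℝ) • M 0 := by
        conv_lhs => rw [hy']
        simp
      rw [hMy, wedgeNorm_add]; simp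
    rw [hz, ← h0, mul_zero]
  · -- wedgeNorm x y > 0
    set s : ℝ := wedgeNorm x y with hs
    set u : EuclideanSpace ℝ (Fin m) := s⁻¹ • (y - ⟪x, y⟫ • x) with hu
    have hnu : ‖u‖ = 1 := by
      rw [hu, norm_smul, Real.norm_eq_abs, abs_of_pos (inv_pos.mpr hpos), ← hseq]
      field_simp
    have horth : ⟪x, u⟫ = 0 := by
      rw [hu, real_inner_smul_right, inner_sub_right, real_inner_smul_right,
        real_inner_self_eq_norm_sq, hx]
      simp
    have hyeq : y = ⟪x, y⟫ • x + s • u := by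
      rw [hu, smul_inv_smul₀ (ne_of_gt hpos)]
      abel
    have hMy : M y = ⟪x, y⟫ • M x + s • M u := by
      conv_lhs => rw [hyeq]
      simp
    have hW : wedgeNorm (M x) (M y) = s * wedgeNorm (M x) (M u) := by
      rw [hMy, wedgeNorm_add, abs_of_pos hpos]
    have hmem : wedgeNorm (M x) (M u) ∈ {c : ℝ | ∃ u v : EuclideanSpace ℝ (Fin m),
        ‖u‖ = 1 ∧ ‖v‖ = 1 ∧ ⟪u, v⟫ = 0 ∧ c = wedgeNorm (M u) (M v)} :=
      ⟨x, u, hx, hnu, horth, rfl⟩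
    have hle : wedgeNorm (M x) (M u) ≤ wedgeOpNorm M :=
      le_csSup ⟨‖M‖ ^ 2, wedgeOpNorm_mem_le M⟩ hmem
    rw [hW, mul_comm (wedgeOpNorm M) s]
    exact mul_le_mul_of_nonneg_left hle (le_of_lt hpos)

/-- For `M ∈ GL(m)` acting on projective space with the angular distance
`d(x̂, ŷ) = ‖x ∧ y‖` (unit representatives): the distortion satisfies
`d(Mx̂, Mŷ)/d(x̂, ŷ) ≤ ‖∧²M‖/(‖Mx‖·‖My‖)`, and consequently the Lipschitz constant of
the projective action of `M` is at most `‖M‖²·‖M⁻¹‖²`. -/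
theorem projective_action_distortion_bound
    {m : ℕ} (M : EuclideanSpace ℝ (Fin m) ≃L[ℝ] EuclideanSpace ℝ (Fin m)) :
    (∀ x y : EuclideanSpace ℝ (Fin m), ‖x‖ = 1 → ‖y‖ = 1 → wedgeNorm x y ≠ 0 →
      (wedgeNorm (M x) (M y) / (‖M x‖ * ‖M y‖)) / wedgeNorm x y
        ≤ wedgeOpNorm (M : EuclideanSpace ℝ (Fin m) →L[ℝ] EuclideanSpace ℝ (Fin m))
          / (‖M x‖ * ‖M y‖)) ∧
    (∀ x y : EuclideanSpace ℝ (Fin m), ‖x‖ = 1 → ‖y‖ = 1 →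
      wedgeNorm ((‖M x‖)⁻¹ • M x) ((‖M y‖)⁻¹ • M y)
        ≤ ‖(M : EuclideanSpace ℝ (Fin m) →L[ℝ] EuclideanSpace ℝ (Fin m))‖ ^ 2
          * ‖(M.symm : EuclideanSpace ℝ (Fin m) →L[ℝ] EuclideanSpace ℝ (Fin m))‖ ^ 2
          * wedgeNorm x y) := by
  have hMpos : ∀ x : EuclideanSpace ℝ (Fin m), ‖x‖ = 1 → 0 < ‖M x‖ := by
    intro x hx
    rw [norm_pos_iff]
    intro h
    have : x = 0 := by
      have := congrArg M.symm h
      simpa using this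
    rw [this] at hx; simp at hx
  constructor
  · intro x y hx hy hne
    have hw : 0 < wedgeNorm x y := lt_of_le_of_ne (wedgeNorm_nonneg _ _) (Ne.symm hne)
    have hP : 0 < ‖M x‖ * ‖M y‖ := mul_pos (hMpos x hx) (hMpos y hy)
    have hcore := wedge_core (M : EuclideanSpace ℝ (Fin m) →L[ℝ] EuclideanSpace ℝ (Fin m))
      x y hx hy
    rw [div_div, div_le_div_iff₀ (by positivity) hP]
    calc wedgeNorm (M x) (M y) * (‖M x‖ * ‖M y‖)
        ≤ (wedgeOpNorm (M : EuclideanSpace ℝ (Fin m) →L[ℝ] EuclideanSpace ℝ (Fin m))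
            * wedgeNorm x y) * (‖M x‖ * ‖M y‖) :=
          mul_le_mul_of_nonneg_right hcore hP.le
      _ = _ := by ring
  · intro x y hx hy
    set N := (M : EuclideanSpace ℝ (Fin m) →L[ℝ] EuclideanSpace ℝ (Fin m))
    set K := ‖(M.symm : EuclideanSpace ℝ (Fin m) →L[ℝ] EuclideanSpace ℝ (Fin m))‖ with hK
    have ha : 0 < ‖M x‖ := hMpos x hx
    have hb : 0 < ‖M y‖ := hMpos y hy
    have hK0 : 0 ≤ K := norm_nonneg _
    have hinv : ∀ z : EuclideanSpace ℝ (Fin m), ‖z‖ = 1 → 0 < ‖M z‖ → ‖M z‖⁻¹ ≤ K := by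
      intro z hz hMz
      have h1 : (1 : ℝ) ≤ K * ‖M z‖ := by
        calc (1 : ℝ) = ‖z‖ := hz.symm
          _ = ‖M.symm (M z)‖ := by simp
          _ ≤ K * ‖M z‖ :=
            (M.symm : EuclideanSpace ℝ (Fin m) →L[ℝ] EuclideanSpace ℝ (Fin m)).le_opNorm _
      have := (div_le_iff₀ hMz).mpr h1
      rwa [one_div] at this
    have haK := hinv x hx ha
    have hbK := hinv y hy hb
    have hW0 : 0 ≤ wedgeNorm (M x) (M y) := wedgeNorm_nonneg _ _
    have hw0 : 0 ≤ wedgeNorm x y := wedgeNorm_nonneg _ _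
    have hWle : wedgeNorm (M x) (M y) ≤ ‖N‖ ^ 2 * wedgeNorm x y := by
      calc wedgeNorm (M x) (M y) ≤ wedgeOpNorm N * wedgeNorm x y := wedge_core N x y hx hy
        _ ≤ ‖N‖ ^ 2 * wedgeNorm x y :=
          mul_le_mul_of_nonneg_right (wedgeOpNorm_le_sq N) hw0
    have heq : wedgeNorm ((‖M x‖)⁻¹ • M x) ((‖M y‖)⁻¹ • M y)
        = ‖M x‖⁻¹ * ‖M y‖⁻¹ * wedgeNorm (M x) (M y) := by
      rw [wedgeNorm_smul_left, wedgeNorm_smul_right, abs_of_pos (inv_pos.mpr ha),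
        abs_of_pos (inv_pos.mpr hb)]
      ring
    rw [heq]
    calc ‖M x‖⁻¹ * ‖M y‖⁻¹ * wedgeNorm (M x) (M y)
        ≤ (K * K) * wedgeNorm (M x) (M y) := by
          apply mul_le_mul_of_nonneg_right _ hW0
          exact mul_le_mul haK hbK (by positivity) hK0
      _ ≤ (K * K) * (‖N‖ ^ 2 * wedgeNorm x y) :=
          mul_le_mul_of_nonneg_left hWle (by positivity)
      _ = ‖N‖ ^ 2 * K ^ 2 * wedgeNorm x y := by ring
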